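/- The fusion law for 'all': for all strategies s₁, s₂, term t, and result r, eval (Seq (All s₁) (All s₂)) t r holds iff eval (All (Seq s₁ s₂)) t r holds, provided s₁ is deterministic (for all t, r, r', eval s₁ t r and eval s₁ t r' imply r = r'). -/

import Mathlib

inductive Term where
  | Node : String → List Term → Term

inductive Strategy where
  | Id : Strategy
  | Fail : Strategy
  | Seq : Strategy → Strategy → Strategy
  | Choice : Strategy → Strategy → Strategy
  | All : Strategy → Strategy
  | One : Strategy → Strategy

inductive eval : Strategy → Term → Option Term → Prop where
  | id : ∀ t, eval .Id t (some t)
  | fail : ∀ t, eval .Fail t none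
  | seq_fail : ∀ {s s' : Strategy} {t : Term},
      eval s t none → eval (.Seq s s') t none
  | seq_ok : ∀ {s s' : Strategy} {t t' : Term} {r : Option Term},
      eval s t (some t') → eval s' t' r → eval (.Seq s s') t r
  | choice_ok : ∀ {s s' : Strategy} {t t' : Term},
      eval s t (some t') → eval (.Choice s s') t (some t')
  | choice_fail : ∀ {s s' : Strategy} {t : Term} {r : Option Term},
      eval s t none → eval s' t r → eval (.Choice s s') t r
  | all_ok : ∀ {s : Strategy} {c : String} {ts ts' : List Term},
      ts'.length = ts.length →
      (∀ i (hi : i < ts.length) (hi' : i < ts'.length),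
        eval s (ts.get ⟨i, hi⟩) (some (ts'.get ⟨i, hi'⟩))) →
      eval (.All s) (.Node c ts) (some (.Node c ts'))
  | all_fail : ∀ {s : Strategy} {c : String} {ts : List Term} {t : Term},
      t ∈ ts → eval s t none → eval (.All s) (.Node c ts) none
  | one_ok : ∀ {s : Strategy} {c : String} {ts : List Term} {t' : Term} {i : ℕ}
      (hi : i < ts.length),
      eval s (ts.get ⟨i, hi⟩) (some t') →
      (∀ j (hj : j < i), eval s (ts.get ⟨j, Nat.lt_trans hj hi⟩) none) →
      eval (.One s) (.Node c ts) (some (.Node c (ts.set i t')))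
  | one_fail : ∀ {s : Strategy} {c : String} {ts : List Term},
      (∀ t ∈ ts, eval s t none) → eval (.One s) (.Node c ts) none

lemma eval_total : ∀ (s : Strategy) (t : Term), ∃ r, eval s t r := by
  intro s
  induction s with
  | Id => exact fun t => ⟨some t, .id t⟩
  | Fail => exact fun t => ⟨none, .fail t⟩
  | Seq s s' ih ih' =>
    intro t
    obtain ⟨r, hr⟩ := ih t
    cases r with
    | none => exact ⟨none, .seq_fail hr⟩
    | some u =>
      obtain ⟨r', hr'⟩ := ih' u
      exact ⟨r', .seq_ok hr hr'⟩
  | Choice s s' ih ih' =>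
    intro t
    obtain ⟨r, hr⟩ := ih t
    cases r with
    | none =>
      obtain ⟨r', hr'⟩ := ih' t
      exact ⟨r', .choice_fail hr hr'⟩
    | some u => exact ⟨some u, .choice_ok hr⟩
  | All s ih =>
    intro t
    obtain ⟨c, ts⟩ := t
    have key : ∀ ts : List Term, (∃ t ∈ ts, eval s t none) ∨
        ∃ ts' : List Term, ts'.length = ts.length ∧
          ∀ i (hi : i < ts.length) (hi' : i < ts'.length),
            eval s (ts.get ⟨i, hi⟩) (some (ts'.get ⟨i, hi'⟩)) := by
      intro ts
      induction ts with
      | nil => exact Or.inr ⟨[], rfl, by simp⟩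
      | cons a l ihl =>
        obtain ⟨r, hr⟩ := ih a
        cases r with
        | none => exact Or.inl ⟨a, List.mem_cons_self, hr⟩
        | some u =>
          rcases ihl with ⟨t, ht, hn⟩ | ⟨l', hlen, hptw⟩
          · exact Or.inl ⟨t, List.mem_cons_of_mem a ht, hn⟩
          · refine Or.inr ⟨u :: l', by simp [hlen], ?_⟩
            intro i hi hi'
            cases i with
            | zero => exact hr
            | succ j =>
              exact hptw j (Nat.lt_of_succ_lt_succ hi) (Nat.lt_of_succ_lt_succ hi')
    rcases key ts with ⟨t, ht, hn⟩ | ⟨ts', hlen, hptw⟩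
    · exact ⟨none, .all_fail ht hn⟩
    · exact ⟨some (.Node c ts'), .all_ok hlen hptw⟩
  | One s ih =>
    intro t
    obtain ⟨c, ts⟩ := t
    have key : ∀ ts : List Term, (∀ t ∈ ts, eval s t none) ∨
        ∃ i, ∃ hi : i < ts.length, ∃ u, eval s (ts.get ⟨i, hi⟩) (some u) ∧
          ∀ j (hj : j < i), eval s (ts.get ⟨j, Nat.lt_trans hj hi⟩) none := by
      intro ts
      induction ts with
      | nil => exact Or.inl (by simp)
      | cons a l ihl =>
        obtain ⟨r, hr⟩ := ih a
        cases r with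
        | some u =>
          exact Or.inr ⟨0, Nat.succ_pos _, u, hr, fun j hj => absurd hj (Nat.not_lt_zero j)⟩
        | none =>
          rcases ihl with hall | ⟨i, hi, u, hu, hprev⟩
          · refine Or.inl ?_
            intro t ht
            rcases List.mem_cons.mp ht with rfl | ht
            · exact hr
            · exact hall t ht
          · refine Or.inr ⟨i + 1, Nat.succ_lt_succ hi, u, hu, ?_⟩
            intro j hj
            cases j with
            | zero => exact hr
            | succ k => exact hprev k (Nat.lt_of_succ_lt_succ hj)
    rcases key ts with hall | ⟨i, hi, u, hu, hprev⟩
    · exact ⟨none, .one_fail hall⟩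
    · exact ⟨some (.Node c (ts.set i u)), .one_ok hi hu hprev⟩

theorem stmt9 : ∀ (s₁ s₂ : Strategy),
    (∀ (t : Term) (r r' : Option Term), eval s₁ t r → eval s₁ t r' → r = r') →
    ∀ (t : Term) (r : Option Term),
      eval (.Seq (.All s₁) (.All s₂)) t r ↔ eval (.All (.Seq s₁ s₂)) t r := by
  intro s₁ s₂ hdet t r
  constructor
  · intro h
    cases h with
    | seq_fail h1 =>
      cases h1 with
      | all_fail ht hn => exact .all_fail ht (.seq_fail hn)
    | seq_ok h1 h2 =>
      cases h1 with
      | all_ok hlen hptw =>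
        cases h2 with
        | all_ok hlen2 hptw2 =>
          rename_i c ts ts' ts''
          refine .all_ok (hlen2.trans hlen) ?_
          intro i hi hi'
          have hi1 : i < ts'.length := by omega
          exact .seq_ok (hptw i hi hi1) (hptw2 i hi1 hi')
        | all_fail ht hn =>
          rename_i c ts ts' t₀
          obtain ⟨j, hjt⟩ := List.mem_iff_get.mp ht
          subst hjt
          have hj : (j : ℕ) < ts.length := by have := j.2; omega
          exact .all_fail (List.get_mem _ ⟨_, hj⟩)
            (.seq_ok (hptw j hj j.2) hn)
  · intro h
    cases h with
    | all_ok hlen hptw =>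
      rename_i c ts ts''
      have hex : ∀ i : Fin ts.length, ∃ u, eval s₁ (ts.get i) (some u) ∧
          eval s₂ u (some (ts''.get ⟨i, by have := i.2; omega⟩)) := by
        intro i
        have := hptw i i.2 (by have := i.2; omega)
        cases this with
        | seq_ok ha hb => exact ⟨_, ha, hb⟩
      classical
      set us := List.ofFn (fun i : Fin ts.length => Classical.choose (hex i)) with hus
      have hlen' : us.length = ts.length := by simp [hus]
      have hget : ∀ i (hi : i < ts.length) (hi' : i < us.length),
          us.get ⟨i, hi'⟩ = Classical.choose (hex ⟨i, hi⟩) := by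
        intro i hi hi'
        simp [hus]
      refine .seq_ok (t' := .Node c us) (.all_ok hlen' ?_) (.all_ok ?_ ?_)
      · intro i hi hi'
        rw [hget i hi hi']
        exact (Classical.choose_spec (hex ⟨i, hi⟩)).1
      · rw [hlen, hlen']
      · intro i hi hi'
        have hits : i < ts.length := by omega
        rw [hget i hits hi]
        exact (Classical.choose_spec (hex ⟨i, hits⟩)).2
    | all_fail ht hn =>
      rename_i c ts t₀
      cases hn with
      | seq_fail h1 => exact .seq_fail (.all_fail ht h1)
      | seq_ok h1 h2 =>
        rename_i u
        obtain ⟨r₀, hr₀⟩ := eval_total (.All s₁) (.Node c ts)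
        cases r₀ with
        | none => exact .seq_fail hr₀
        | some t' =>
          cases hr₀ with
          | all_ok hlen hptw =>
            rename_i ts'
            obtain ⟨j, hjt⟩ := List.mem_iff_get.mp ht
            subst hjt
            have hj' : (j : ℕ) < ts'.length := by have := j.2; omega
            have heq : some u = some (ts'.get ⟨j, hj'⟩) :=
              hdet _ _ _ h1 (hptw j j.2 hj')
            have : u = ts'.get ⟨j, hj'⟩ := Option.some.inj heq
            subst this
            exact .seq_ok (.all_ok hlen hptw) (.all_fail (List.get_mem _ ⟨_, hj'⟩) h2)
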